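/- If H : α → ℕ is injective and L is the strictly sorted list of hashes of a revoked set R, then after revoking one more credential c₀ ∉ R (inserting H(c₀) into L to get L'), for every credential c ≠ c₀ with c ∉ R, the hash H(c) still admits no membership in L' and (assuming 0 < H(c) and H(c) bounded by a sentinel M exceeding all elements of L') still admits a gap witness in 0 :: L' ++ [M]. -/

import Mathlib

theorem gap_aux (x M : ℕ) (hxM : x < M) :
    ∀ (l : List ℕ) (a : ℕ), a < x → (∀ y ∈ l, y ≠ x) →
    ∃ i, ∃ hi : i + 1 < (a :: (l ++ [M])).length,
      (a :: (l ++ [M])).get ⟨i, Nat.lt_of_succ_lt hi⟩ < x ∧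
        x < (a :: (l ++ [M])).get ⟨i + 1, hi⟩ := by
  intro l
  induction l with
  | nil =>
    intro a ha _
    exact ⟨0, by simp, by simpa using ha, by simpa using hxM⟩
  | cons y l ih =>
    intro a ha hne
    rcases lt_or_gt_of_ne (hne y (by simp)) with hy | hy
    · obtain ⟨i, hi, h1, h2⟩ := ih y hy (fun z hz => hne z (by simp [hz]))
      exact ⟨i + 1, by simpa using hi, by simpa using h1, by simpa using h2⟩
    · exact ⟨0, by simp, by simpa using ha, by simpa using hy⟩


theorem revocation_update_preserves_witness {α : Type*} [DecidableEq α]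
    (H : α → ℕ) (hH : Function.Injective H) (R : Finset α) (c₀ : α)
    (hc₀ : c₀ ∉ R)
    (L' : List ℕ) (hL' : L' = Finset.sort ((insert c₀ R).image H) (· ≤ ·))
    (c : α) (hne : c ≠ c₀) (hc : c ∉ R) (hpos : 0 < H c)
    (M : ℕ) (hM : ∀ x ∈ L', x < M) (hcM : H c < M) :
    H c ∉ L' ∧
      ∃ i, ∃ hi : i + 1 < (0 :: (L' ++ [M])).length,
        (0 :: (L' ++ [M])).get ⟨i, Nat.lt_of_succ_lt hi⟩ < H c ∧
          H c < (0 :: (L' ++ [M])).get ⟨i + 1, hi⟩ := by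
  have hmem : H c ∉ L' := by
    intro h
    rw [hL', Finset.mem_sort] at h
    obtain ⟨d, hd, hdc⟩ := Finset.mem_image.mp h
    have : d = c := hH hdc
    subst this
    rcases Finset.mem_insert.mp hd with h | h
    · exact hne h
    · exact hc h
  exact ⟨hmem, gap_aux (H c) M hcM L' 0 hpos (fun y hy h => hmem (h ▸ hy))⟩
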